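/- Let F : K̂ → K be a C^{p+1} diffeomorphism between bounded open sets in ℝ³ satisfying ‖∂^α F‖_{L∞(K̂)} ≤ C L (h/L)^{|α|} for 1 ≤ |α| ≤ p+1. Then for every multi-index α with 1 ≤ |α| ≤ p, ‖∂^α(det(DF)(DF)⁻¹)‖_{L∞(K̂)} ≤ C' L² (h/L)^{|α|+2}, where det(DF)(DF)⁻¹ is the cofactor matrix of the Jacobian DF, and C' depends only on C, p, and the dimension. -/

import Mathlib

/-- Bound the iterated derivative of a pi-valued function by bounds on its coordinates. -/
private lemma pi_iter_bound {ι : Type*} [Fintype ι] {E G : Type*}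
    [NormedAddCommGroup E] [NormedSpace ℝ E] [NormedAddCommGroup G] [NormedSpace ℝ G]
    {s : Set E} (hs : UniqueDiffOn ℝ s) {x : E} (hx : x ∈ s)
    {f : E → ι → G} {n : ℕ} (hf : ContDiffOn ℝ n f s) {M : ℝ} (hM : 0 ≤ M)
    (hb : ∀ i, ‖iteratedFDerivWithin ℝ n (fun y => f y i) s x‖ ≤ M) :
    ‖iteratedFDerivWithin ℝ n f s x‖ ≤ M := by
  refine ContinuousMultilinearMap.opNorm_le_bound hM fun v => ?_
  have hprod : (0:ℝ) ≤ ∏ j, ‖v j‖ := Finset.prod_nonneg fun _ _ => norm_nonneg _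
  rw [pi_norm_le_iff_of_nonneg (mul_nonneg hM hprod)]
  intro i
  have h1 := (ContinuousLinearMap.proj i : (ι → G) →L[ℝ] G).iteratedFDerivWithin_comp_left
    (hf x hx) hs hx le_rfl
  calc ‖iteratedFDerivWithin ℝ n f s x v i‖
      = ‖((ContinuousLinearMap.proj i : (ι → G) →L[ℝ] G).compContinuousMultilinearMap
          (iteratedFDerivWithin ℝ n f s x)) v‖ := rfl
    _ = ‖iteratedFDerivWithin ℝ n ((ContinuousLinearMap.proj i : (ι → G) →L[ℝ] G) ∘ f) s x v‖ := by
        rw [h1]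
    _ ≤ ‖iteratedFDerivWithin ℝ n ((ContinuousLinearMap.proj i : (ι → G) →L[ℝ] G) ∘ f) s x‖ *
          ∏ j, ‖v j‖ := ContinuousMultilinearMap.le_opNorm _ _
    _ ≤ M * ∏ j, ‖v j‖ := mul_le_mul_of_nonneg_right (hb i) hprod

private lemma entry_contDiffOn {Khat : Set (Fin 3 → ℝ)} (hu : UniqueDiffOn ℝ Khat)
    {F : (Fin 3 → ℝ) → (Fin 3 → ℝ)} {p : ℕ} (hF : ContDiffOn ℝ (p + 1) F Khat)
    (a b : Fin 3) :
    ContDiffOn ℝ p (fun y => fderivWithin ℝ F Khat y (Pi.single b 1) a) Khat := by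
  have hJ : ContDiffOn ℝ p (fderivWithin ℝ F Khat) Khat :=
    hF.fderivWithin hu (by exact_mod_cast le_rfl)
  exact (((ContinuousLinearMap.proj a).comp
    (ContinuousLinearMap.apply ℝ (Fin 3 → ℝ) (Pi.single b 1))).contDiff).comp_contDiffOn hJ

private lemma entry_bound {Khat : Set (Fin 3 → ℝ)} (hu : UniqueDiffOn ℝ Khat)
    {F : (Fin 3 → ℝ) → (Fin 3 → ℝ)} {p : ℕ} (hF : ContDiffOn ℝ (p + 1) F Khat)
    (a b : Fin 3) {x : Fin 3 → ℝ} (hx : x ∈ Khat) {n : ℕ} (hn : n ≤ p) :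
    ‖iteratedFDerivWithin ℝ n (fun y => fderivWithin ℝ F Khat y (Pi.single b 1) a) Khat x‖ ≤
      ‖iteratedFDerivWithin ℝ (n + 1) F Khat x‖ := by
  have hJ : ContDiffOn ℝ p (fderivWithin ℝ F Khat) Khat :=
    hF.fderivWithin hu (by exact_mod_cast le_rfl)
  set E : ((Fin 3 → ℝ) →L[ℝ] (Fin 3 → ℝ)) →L[ℝ] ℝ :=
    (ContinuousLinearMap.proj a).comp
      (ContinuousLinearMap.apply ℝ (Fin 3 → ℝ) (Pi.single b 1)) with hE
  have hEnorm : ‖E‖ ≤ 1 := by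
    refine ContinuousLinearMap.opNorm_le_bound _ zero_le_one fun T => ?_
    rw [one_mul]
    calc ‖E T‖ = ‖T (Pi.single b 1) a‖ := rfl
      _ ≤ ‖T (Pi.single b 1)‖ := norm_le_pi_norm _ a
      _ ≤ ‖T‖ * ‖(Pi.single b 1 : Fin 3 → ℝ)‖ := T.le_opNorm _
      _ = ‖T‖ := by
          rw [Pi.norm_single, norm_one, mul_one]
  have heq : (fun y => fderivWithin ℝ F Khat y (Pi.single b 1) a) =
      E ∘ (fderivWithin ℝ F Khat) := rfl
  rw [heq, E.iteratedFDerivWithin_comp_left (hJ x hx) hu hx (by exact_mod_cast hn)]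
  calc ‖E.compContinuousMultilinearMap (iteratedFDerivWithin ℝ n (fderivWithin ℝ F Khat) Khat x)‖
      ≤ ‖E‖ * ‖iteratedFDerivWithin ℝ n (fderivWithin ℝ F Khat) Khat x‖ :=
        E.norm_compContinuousMultilinearMap_le _
    _ ≤ 1 * ‖iteratedFDerivWithin ℝ n (fderivWithin ℝ F Khat) Khat x‖ :=
        mul_le_mul_of_nonneg_right hEnorm (norm_nonneg _)
    _ = ‖iteratedFDerivWithin ℝ (n + 1) F Khat x‖ := by
        rw [one_mul, norm_iteratedFDerivWithin_fderivWithin hu hx]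

theorem stmt17
    (p : ℕ) (Khat : Set (Fin 3 → ℝ)) (hKhat : IsOpen Khat)
    (F : (Fin 3 → ℝ) → (Fin 3 → ℝ))
    (hF : ContDiffOn ℝ (p + 1) F Khat) (hinj : Set.InjOn F Khat)
    (h L C : ℝ) (hh : 0 < h) (hhL : h ≤ L) (hC : 0 < C)
    (hFbound : ∀ x ∈ Khat, ∀ n : ℕ, 1 ≤ n → n ≤ p + 1 →
      ‖iteratedFDerivWithin ℝ n F Khat x‖ ≤ C * L * (h / L) ^ n) :
    ∃ C' > 0, ∀ x ∈ Khat, ∀ n : ℕ, 1 ≤ n → n ≤ p →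
      ‖iteratedFDerivWithin ℝ n
          (fun y : Fin 3 → ℝ => fun i j : Fin 3 =>
            (Matrix.adjugate
              (Matrix.of fun a b : Fin 3 => fderivWithin ℝ F Khat y (Pi.single b 1) a)) i j)
          Khat x‖ ≤ C' * L ^ 2 * (h / L) ^ (n + 2) := by
  have hu : UniqueDiffOn ℝ Khat := hKhat.uniqueDiffOn
  have hL : 0 < L := hh.trans_le hhL
  set q : ℝ := h / L with hqdef
  have hq0 : 0 < q := div_pos hh hL
  have hgc : ∀ a b : Fin 3,
      ContDiffOn ℝ p (fun y => fderivWithin ℝ F Khat y (Pi.single b 1) a) Khat :=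
    fun a b => entry_contDiffOn hu hF a b
  have hgb : ∀ (a b : Fin 3), ∀ x ∈ Khat, ∀ n : ℕ, n ≤ p →
      ‖iteratedFDerivWithin ℝ n (fun y => fderivWithin ℝ F Khat y (Pi.single b 1) a) Khat x‖
        ≤ C * L * q ^ (n + 1) := by
    intro a b x hx n hn
    exact (entry_bound hu hF a b hx hn).trans (hFbound x hx (n + 1) (by omega) (by omega))
  -- product bound
  have hprod : ∀ (a₁ b₁ a₂ b₂ : Fin 3), ∀ x ∈ Khat, ∀ n : ℕ, n ≤ p →
      ‖iteratedFDerivWithin ℝ n (fun y =>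
          fderivWithin ℝ F Khat y (Pi.single b₁ 1) a₁ *
          fderivWithin ℝ F Khat y (Pi.single b₂ 1) a₂) Khat x‖
        ≤ 2 ^ n * (C ^ 2 * L ^ 2 * q ^ (n + 2)) := by
    intro a₁ b₁ a₂ b₂ x hx n hn
    have hmain := norm_iteratedFDerivWithin_mul_le (𝕜 := ℝ) (N := (p : WithTop ℕ∞))
      (hgc a₁ b₁) (hgc a₂ b₂) hu hx (n := n) (by exact_mod_cast hn)
    refine hmain.trans ?_
    have hterm : ∀ i ∈ Finset.range (n + 1),
        (n.choose i : ℝ) *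
          ‖iteratedFDerivWithin ℝ i (fun y => fderivWithin ℝ F Khat y (Pi.single b₁ 1) a₁) Khat x‖ *
          ‖iteratedFDerivWithin ℝ (n - i)
            (fun y => fderivWithin ℝ F Khat y (Pi.single b₂ 1) a₂) Khat x‖
        ≤ (n.choose i : ℝ) * (C ^ 2 * L ^ 2 * q ^ (n + 2)) := by
      intro i hi
      have hi' : i ≤ n := Nat.lt_succ_iff.mp (Finset.mem_range.mp hi)
      have h1 := hgb a₁ b₁ x hx i (hi'.trans hn)
      have h2 := hgb a₂ b₂ x hx (n - i) (by omega)
      calc (n.choose i : ℝ) * _ * _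
          ≤ (n.choose i : ℝ) * (C * L * q ^ (i + 1)) * (C * L * q ^ (n - i + 1)) := by
            gcongr
        _ = (n.choose i : ℝ) * (C ^ 2 * L ^ 2 * (q ^ (i + 1) * q ^ (n - i + 1))) := by ring
        _ = (n.choose i : ℝ) * (C ^ 2 * L ^ 2 * q ^ (n + 2)) := by
            rw [← pow_add, show i + 1 + (n - i + 1) = n + 2 by omega]
    calc (∑ i ∈ Finset.range (n + 1), (n.choose i : ℝ) * _ * _)
        ≤ ∑ i ∈ Finset.range (n + 1), (n.choose i : ℝ) * (C ^ 2 * L ^ 2 * q ^ (n + 2)) :=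
          Finset.sum_le_sum hterm
      _ = (∑ i ∈ Finset.range (n + 1), (n.choose i : ℝ)) * (C ^ 2 * L ^ 2 * q ^ (n + 2)) :=
          (Finset.sum_mul _ _ _).symm
      _ = 2 ^ n * (C ^ 2 * L ^ 2 * q ^ (n + 2)) := by
          rw [← Nat.cast_sum, Nat.sum_range_choose]; push_cast; ring
  -- difference of products bound
  have hdiff : ∀ (a₁ b₁ a₂ b₂ a₃ b₃ a₄ b₄ : Fin 3), ∀ x ∈ Khat, ∀ n : ℕ, n ≤ p →
      ‖iteratedFDerivWithin ℝ n (fun y =>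
          fderivWithin ℝ F Khat y (Pi.single b₁ 1) a₁ *
            fderivWithin ℝ F Khat y (Pi.single b₂ 1) a₂ -
          fderivWithin ℝ F Khat y (Pi.single b₃ 1) a₃ *
            fderivWithin ℝ F Khat y (Pi.single b₄ 1) a₄) Khat x‖
        ≤ 2 ^ (p + 1) * C ^ 2 * L ^ 2 * q ^ (n + 2) := by
    intro a₁ b₁ a₂ b₂ a₃ b₃ a₄ b₄ x hx n hn
    set A : (Fin 3 → ℝ) → ℝ := fun y =>
      fderivWithin ℝ F Khat y (Pi.single b₁ 1) a₁ *
        fderivWithin ℝ F Khat y (Pi.single b₂ 1) a₂ with hA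
    set B : (Fin 3 → ℝ) → ℝ := fun y =>
      fderivWithin ℝ F Khat y (Pi.single b₃ 1) a₃ *
        fderivWithin ℝ F Khat y (Pi.single b₄ 1) a₄ with hB
    have hAc : ContDiffOn ℝ n A Khat :=
      (((hgc a₁ b₁).mul (hgc a₂ b₂)).of_le (by exact_mod_cast hn))
    have hBc : ContDiffOn ℝ n B Khat :=
      (((hgc a₃ b₃).mul (hgc a₄ b₄)).of_le (by exact_mod_cast hn))
    have key : iteratedFDerivWithin ℝ n (fun y => A y - B y) Khat x
        = iteratedFDerivWithin ℝ n A Khat x - iteratedFDerivWithin ℝ n B Khat x := by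
      simp only [sub_eq_add_neg]
      rw [iteratedFDerivWithin_add_apply' (hAc x hx) (hBc.neg x hx) hu hx]
      congr 1
      exact iteratedFDerivWithin_neg_apply hu hx
    rw [key]
    have e1 := hprod a₁ b₁ a₂ b₂ x hx n hn
    have e2 := hprod a₃ b₃ a₄ b₄ x hx n hn
    have h2n : (2:ℝ) ^ n ≤ 2 ^ p := by
      apply pow_le_pow_right₀ one_le_two hn
    calc ‖iteratedFDerivWithin ℝ n A Khat x - iteratedFDerivWithin ℝ n B Khat x‖
        ≤ ‖iteratedFDerivWithin ℝ n A Khat x‖ + ‖iteratedFDerivWithin ℝ n B Khat x‖ :=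
          norm_sub_le _ _
      _ ≤ 2 ^ n * (C ^ 2 * L ^ 2 * q ^ (n + 2)) + 2 ^ n * (C ^ 2 * L ^ 2 * q ^ (n + 2)) := by
          exact add_le_add e1 e2
      _ = 2 * 2 ^ n * (C ^ 2 * L ^ 2 * q ^ (n + 2)) := by ring
      _ ≤ 2 * 2 ^ p * (C ^ 2 * L ^ 2 * q ^ (n + 2)) := by
          have : (0:ℝ) ≤ C ^ 2 * L ^ 2 * q ^ (n + 2) := by positivity
          nlinarith
      _ = 2 ^ (p + 1) * C ^ 2 * L ^ 2 * q ^ (n + 2) := by ring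
  refine ⟨2 ^ (p + 1) * C ^ 2, by positivity, ?_⟩
  intro x hx n hn1 hnp
  have hnp' : (n : WithTop ℕ∞) ≤ (p : WithTop ℕ∞) := by exact_mod_cast hnp
  have hgcn : ∀ a b : Fin 3,
      ContDiffOn ℝ n (fun y => fderivWithin ℝ F Khat y (Pi.single b 1) a) Khat :=
    fun a b => (hgc a b).of_le hnp'
  have hM : (0:ℝ) ≤ 2 ^ (p + 1) * C ^ 2 * L ^ 2 * q ^ (n + 2) := by positivity
  -- full matrix function is ContDiffOn
  have hmat : ContDiffOn ℝ n
      (fun y : Fin 3 → ℝ => fun i j : Fin 3 =>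
        (Matrix.adjugate
          (Matrix.of fun a b : Fin 3 => fderivWithin ℝ F Khat y (Pi.single b 1) a)) i j)
      Khat := by
    rw [contDiffOn_pi]
    intro i
    rw [contDiffOn_pi]
    intro j
    fin_cases i <;> fin_cases j <;>
      simp only [Matrix.adjugate_fin_three, Matrix.of_apply, Matrix.cons_val', Matrix.cons_val_zero,
        Matrix.cons_val_one, Matrix.head_cons, Matrix.empty_val', Matrix.cons_val_fin_one,
        Matrix.head_fin_const, neg_add_eq_sub] <;>
      exact ((hgcn _ _).mul (hgcn _ _)).sub ((hgcn _ _).mul (hgcn _ _))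
  have goal_eq : 2 ^ (p + 1) * C ^ 2 * L ^ 2 * (h / L) ^ (n + 2)
      = 2 ^ (p + 1) * C ^ 2 * L ^ 2 * q ^ (n + 2) := by rw [hqdef]
  rw [goal_eq]
  refine pi_iter_bound hu hx hmat hM ?_
  intro i
  refine pi_iter_bound hu hx ?_ hM ?_
  · rw [contDiffOn_pi]
    intro j
    exact (contDiffOn_pi.mp ((contDiffOn_pi.mp hmat) i)) j
  intro j
  fin_cases i <;> fin_cases j <;>
    simp only [Matrix.adjugate_fin_three, Matrix.of_apply, Matrix.cons_val', Matrix.cons_val_zero,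
      Matrix.cons_val_one, Matrix.head_cons, Matrix.empty_val', Matrix.cons_val_fin_one,
      Matrix.head_fin_const, neg_add_eq_sub] <;>
    exact hdiff _ _ _ _ _ _ _ _ x hx n hnp
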